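/- Let f be the fixed point of the Read-Bajraktarević operator with f(l_j(t)) = c_j t + δ_j s_j(f(t)) + d_j, where each s_j satisfies |s_j(x)−s_j(y)| ≤ ψ(|x−y|) with ψ nondecreasing and ψ(u) ≤ u, and let C = max_j |c_j|, δ = max_j |δ_j|. Then for every subinterval I' ⊆ I and each j, the oscillation satisfies w_f(l_j(I')) ≤ C·|I'| + δ·w_f(I'), where w_f(S) = sup_{a,b ∈ S}|f(a)−f(b)| and |I'| is the length of I'. -/
import Mathlib


/-- Oscillation bound for the fixed point of the Read-Bajraktarević operator:
`w_f(l_j(I')) ≤ C·|I'| + δ·w_f(I')` for every subinterval `I' ⊆ I`. -/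
theorem oscillation_bound (N : ℕ) (hN : 1 ≤ N) (t₀ tN : ℝ) (htI : t₀ < tN)
    (a b c d δ : ℕ → ℝ) (s : ℕ → ℝ → ℝ) (ψ : ℝ → ℝ)
    (hψ_mono : ∀ u v : ℝ, 0 ≤ u → u ≤ v → ψ u ≤ ψ v)
    (hψ_le : ∀ u : ℝ, 0 ≤ u → ψ u ≤ u)
    (hs : ∀ j ∈ Finset.Icc 1 N, ∀ x y : ℝ, |s j x - s j y| ≤ ψ (|x - y|))
    (hne : (Finset.Icc 1 N).Nonempty) (C δmax : ℝ)
    (hC : C = (Finset.Icc 1 N).sup' hne fun j => |c j|)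
    (hδmax : δmax = (Finset.Icc 1 N).sup' hne fun j => |δ j|)
    (f : ℝ → ℝ)
    (hfb : ∃ M : ℝ, ∀ x ∈ Set.Icc t₀ tN, |f x| ≤ M)
    (hf : ∀ j ∈ Finset.Icc 1 N, ∀ u ∈ Set.Icc t₀ tN,
      f (a j * u + b j) = c j * u + δ j * s j (f u) + d j)
    -- oscillation of f on a set S
    (osc : Set ℝ → ℝ)
    (hosc : ∀ S : Set ℝ, osc S = sSup ((fun p : ℝ × ℝ => |f p.1 - f p.2|) '' S ×ˢ S)) :
    ∀ j ∈ Finset.Icc 1 N, ∀ x y : ℝ, t₀ ≤ x → x ≤ y → y ≤ tN →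
      osc ((fun u => a j * u + b j) '' Set.Icc x y) ≤
        C * (y - x) + δmax * osc (Set.Icc x y) := by
  intro j hj x y hx hxy hy
  obtain ⟨M, hM⟩ := hfb
  have hsub : Set.Icc x y ⊆ Set.Icc t₀ tN := Set.Icc_subset_Icc hx hy
  have hCj : |c j| ≤ C := by rw [hC]; exact Finset.le_sup' (fun j => |c j|) hj
  have hδj : |δ j| ≤ δmax := by rw [hδmax]; exact Finset.le_sup' (fun j => |δ j|) hj
  have hδ0 : 0 ≤ δmax := le_trans (abs_nonneg _) hδj
  have hC0 : 0 ≤ C := le_trans (abs_nonneg _) hCj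
  have hbdd : BddAbove ((fun p : ℝ × ℝ => |f p.1 - f p.2|) '' (Set.Icc x y ×ˢ Set.Icc x y)) := by
    refine ⟨2 * M, ?_⟩
    rintro r ⟨⟨u, v⟩, ⟨hu, hv⟩, rfl⟩
    have h1 := hM u (hsub hu)
    have h2 := hM v (hsub hv)
    have := abs_sub (f u) (f v)
    simp only
    linarith
  have hoscIcc : ∀ u v : ℝ, u ∈ Set.Icc x y → v ∈ Set.Icc x y →
      |f u - f v| ≤ osc (Set.Icc x y) := by
    intro u v hu hv
    rw [hosc]
    exact le_csSup hbdd ⟨(u, v), ⟨hu, hv⟩, rfl⟩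
  have hosc0 : 0 ≤ osc (Set.Icc x y) := by
    have := hoscIcc x x ⟨le_refl x, hxy⟩ ⟨le_refl x, hxy⟩
    simpa using this
  rw [hosc]
  apply Real.sSup_le
  · rintro r ⟨⟨p, q⟩, ⟨⟨u, hu, rfl⟩, ⟨v, hv, rfl⟩⟩, rfl⟩
    simp only
    rw [hf j hj u (hsub hu), hf j hj v (hsub hv)]
    have hkey : c j * u + δ j * s j (f u) + d j - (c j * v + δ j * s j (f v) + d j)
        = c j * (u - v) + δ j * (s j (f u) - s j (f v)) := by ring
    rw [hkey]
    have huv : |u - v| ≤ y - x := by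
      rw [abs_sub_le_iff]
      constructor <;> [linarith [hu.1, hu.2, hv.1, hv.2]; linarith [hu.1, hu.2, hv.1, hv.2]]
    have t1 : |c j * (u - v)| ≤ C * (y - x) := by
      rw [abs_mul]
      exact mul_le_mul hCj huv (abs_nonneg _) hC0
    have t2 : |δ j * (s j (f u) - s j (f v))| ≤ δmax * osc (Set.Icc x y) := by
      rw [abs_mul]
      calc |δ j| * |s j (f u) - s j (f v)| ≤ |δ j| * ψ (|f u - f v|) :=
            mul_le_mul_of_nonneg_left (hs j hj (f u) (f v)) (abs_nonneg _)
        _ ≤ |δ j| * |f u - f v| :=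
            mul_le_mul_of_nonneg_left (hψ_le _ (abs_nonneg _)) (abs_nonneg _)
        _ ≤ δmax * osc (Set.Icc x y) :=
            mul_le_mul hδj (hoscIcc u v hu hv) (abs_nonneg _) hδ0
    calc |c j * (u - v) + δ j * (s j (f u) - s j (f v))|
        ≤ |c j * (u - v)| + |δ j * (s j (f u) - s j (f v))| := abs_add_le _ _
      _ ≤ C * (y - x) + δmax * osc (Set.Icc x y) := add_le_add t1 t2
  · have : 0 ≤ C * (y - x) := mul_nonneg hC0 (by linarith)
    nlinarith
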